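/- arXiv:2510.01277 — 2 statements merged into one kernel-verified Lean document; each statement's English description precedes it below -/
import Mathlib

section
/- Let r be a positive integer and let c_ψ(m, r) denote the number of relatively prime compositions of m with exactly r parts, i.e., ordered r-tuples (a_1, …, a_r) of positive integers summing to m with gcd(a_1, …, a_r) = 1. Then for every positive integer n, ∑_{k=1}^{n} C(k−1, r−1)·ω(n−k) = ∑_{m=1}^{n} c_ψ(m, r) · ( ∑_{j=0}^{⌊(n−m)/m⌋} ω((n−m) − j·m) ), where C(a, b) denotes the binomial coefficient. -/
open scoped Classical

/-- The pentagonal-number coefficient function `ω`: `ω 0 = 1`,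
`ω m = (-1)^k` if `m = (3k² + k)/2` or `m = (3k² - k)/2` for a positive integer `k`,
and `ω m = 0` otherwise (in particular for negative `m`). -/
noncomputable def pentaCoeff (m : ℤ) : ℤ :=
  if m = 0 then 1
  else if h : ∃ k : ℕ, 0 < k ∧ (2 * m = 3 * (k : ℤ) ^ 2 + k ∨ 2 * m = 3 * (k : ℤ) ^ 2 - k)
  then (-1) ^ h.choose
  else 0

/-- The inner sum `∑_{j=0}^{⌊(n-m)/m⌋} ω((n-m) - j·m)`. -/
noncomputable def pentaSum (n m : ℕ) : ℤ :=
  ∑ j ∈ Finset.range ((n - m) / m + 1), pentaCoeff (((n : ℤ) - m) - j * m)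

/-- The number of relatively prime compositions of `m` with exactly `r` parts. -/
noncomputable def relPrimeCompositionsWithParts (m r : ℕ) : ℕ :=
  ((Finset.univ : Finset (Composition m)).filter
    fun c => c.length = r ∧ (c.blocks : Multiset ℕ).gcd = 1).card

lemma eq_helper {r : ℕ} (f : Fin r → ℕ) (j i : Fin r) (hj : j = i) :
    f j + 1 - 1 = f i := by subst hj; omega

def compEquiv (k r : ℕ) (hrk : r ≤ k) :
    {c : Composition k // c.length = r} ≃ {g : Fin r → ℕ // ∑ i, g i = k - r} where
  toFun c := ⟨fun i => c.1.blocksFun (finCongr c.2.symm i) - 1, by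
    show ∑ i : Fin r, (c.1.blocksFun (finCongr c.2.symm i) - 1) = k - r
    have hb : ∀ i : Fin r, 1 ≤ c.1.blocksFun (finCongr c.2.symm i) :=
      fun i => c.1.one_le_blocksFun _
    have hsum : ∑ i : Fin r, c.1.blocksFun (finCongr c.2.symm i) = k := by
      rw [Fintype.sum_equiv (finCongr c.2.symm) _ (fun j => c.1.blocksFun j) (fun i => rfl)]
      exact c.1.sum_blocksFun
    have h3 : ∑ i : Fin r, (c.1.blocksFun (finCongr c.2.symm i) - 1 + 1) =
        ∑ i : Fin r, c.1.blocksFun (finCongr c.2.symm i) :=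
      Finset.sum_congr rfl fun i _ => Nat.sub_add_cancel (hb i)
    rw [Finset.sum_add_distrib] at h3
    simp only [Finset.sum_const, Finset.card_univ, Fintype.card_fin, smul_eq_mul,
      mul_one] at h3
    omega⟩
  invFun g := ⟨⟨List.ofFn (fun i => g.1 i + 1), by
      intro x hx
      rw [List.mem_ofFn] at hx
      obtain ⟨i, hi⟩ := hx
      exact hi ▸ Nat.succ_pos (g.1 i), by
      rw [List.sum_ofFn]
      have h4 : ∑ i : Fin r, (g.1 i + 1) = (∑ i : Fin r, g.1 i) + r := by
        rw [Finset.sum_add_distrib]; simp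
      rw [h4, g.2]
      omega⟩,
    by simp [Composition.length]⟩
  left_inv c := by
    apply Subtype.ext
    apply Composition.ext
    apply List.ext_get
    · simp only [List.length_ofFn]
      exact c.2.symm
    · intro i h1 h2
      simp only [List.get_ofFn]
      show c.1.blocks.get ⟨i, h2⟩ - 1 + 1 = c.1.blocks.get ⟨i, h2⟩
      have hpos : 0 < c.1.blocks.get ⟨i, h2⟩ := c.1.blocks_pos (List.get_mem c.1.blocks ⟨i, h2⟩)
      exact Nat.sub_add_cancel hpos
  right_inv g := by
    apply Subtype.ext
    funext i
    simp only [Composition.blocksFun, List.get_ofFn]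
    exact eq_helper g.1 _ i (Fin.ext rfl)

noncomputable def tupleSymEquiv (r s : ℕ) :
    {g : Fin r → ℕ // ∑ i, g i = s} ≃ Sym (Fin r) s where
  toFun g := ⟨Finsupp.toMultiset (Finsupp.equivFunOnFinite.symm g.1), by
    rw [Finsupp.card_toMultiset, Finsupp.sum_fintype _ _ (fun _ => rfl)]
    simpa using g.2⟩
  invFun m := ⟨fun i => Multiset.count i m.1, by
    show ∑ i : Fin r, Multiset.count i m.1 = s
    calc ∑ i : Fin r, Multiset.count i m.1
        = ∑ i ∈ m.1.toFinset, Multiset.count i m.1 :=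
          (Finset.sum_subset (Finset.subset_univ _) (fun x _ hx => by simpa using hx)).symm
      _ = s := by rw [Multiset.toFinset_sum_count_eq]; exact m.2⟩
  left_inv g := by
    apply Subtype.ext
    funext i
    simp [Finsupp.count_toMultiset]
  right_inv m := by
    apply Subtype.ext
    show Finsupp.toMultiset (Finsupp.equivFunOnFinite.symm fun i => Multiset.count i m.1) = m.1
    have : (Finsupp.equivFunOnFinite.symm fun i => Multiset.count i m.1) =
        Multiset.toFinsupp m.1 := by
      ext a
      simp
    rw [this, Multiset.toFinsupp_toMultiset]

lemma card_comp_length (k r : ℕ) (hk : 0 < k) (hr : 0 < r) :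
    ((Finset.univ : Finset (Composition k)).filter (fun c => c.length = r)).card
      = (k - 1).choose (r - 1) := by
  rcases le_or_gt r k with hrk | hkr
  · rw [← Fintype.card_subtype,
      Fintype.card_congr ((compEquiv k r hrk).trans (tupleSymEquiv r (k - r))),
      Sym.card_sym_eq_choose, Fintype.card_fin]
    have h1 : r + (k - r) - 1 = k - 1 := by omega
    have h2 : k - r = (k - 1) - (r - 1) := by omega
    rw [h1, h2, Nat.choose_symm (by omega)]
  · have hempty : (Finset.univ : Finset (Composition k)).filter (fun c => c.length = r) = ∅ := by
      rw [Finset.filter_eq_empty_iff]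
      intro c _
      have := c.length_le
      omega
    rw [hempty]
    simp [Nat.choose_eq_zero_of_lt (show k - 1 < r - 1 by omega)]

lemma map_div_map_mul' (d : ℕ) (l : List ℕ) (h : ∀ x ∈ l, d ∣ x) :
    (l.map (· / d)).map (fun x => d * x) = l := by
  induction l with
  | nil => rfl
  | cons a l ih =>
    simp only [List.map_cons]
    rw [Nat.mul_div_cancel' (h a (by simp)), ih (fun x hx => h x (by simp [hx]))]

lemma multiset_gcd_mul' (d : ℕ) (s : Multiset ℕ) :
    (s.map (fun x => d * x)).gcd = d * s.gcd := by
  induction s using Multiset.induction_on with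
  | empty => simp
  | cons a s ih =>
    simp only [Multiset.map_cons, Multiset.gcd_cons, ih]
    exact Nat.gcd_mul_left d a s.gcd

lemma sum_map_div' (d : ℕ) (l : List ℕ) (h : ∀ x ∈ l, d ∣ x) :
    (l.map (· / d)).sum = l.sum / d := by
  induction l with
  | nil => simp
  | cons a t ih =>
    simp only [List.map_cons, List.sum_cons]
    rw [ih (fun x hx => h x (List.mem_cons_of_mem _ hx)),
      Nat.add_div_of_dvd_right (h a (List.mem_cons_self (a := a) (l := t)))]

lemma sum_map_mul' (d : ℕ) (l : List ℕ) : (l.map (fun x => d * x)).sum = d * l.sum := by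
  induction l with
  | nil => simp
  | cons a t ih => simp [ih, Nat.mul_add]

/-- Scaling a composition of `m` by `d` gives a composition of `k = d * m`. -/
def scaleComp (d k m : ℕ) (hd : 0 < d) (h : k = d * m) (c : Composition m) : Composition k where
  blocks := c.blocks.map (fun x => d * x)
  blocks_pos := by
    intro x hx
    rw [List.mem_map] at hx
    obtain ⟨y, hy, rfl⟩ := hx
    exact Nat.mul_pos hd (c.blocks_pos hy)
  blocks_sum := by rw [sum_map_mul', c.blocks_sum, h]

lemma fiber_card (k r d : ℕ) (hd : d ∈ Nat.divisors k) :
    ((Finset.univ : Finset (Composition k)).filter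
      (fun c => c.length = r ∧ (c.blocks : Multiset ℕ).gcd = d)).card
      = relPrimeCompositionsWithParts (k / d) r := by
  have hd0 : 0 < d := Nat.pos_of_mem_divisors hd
  have hdk : d ∣ k := (Nat.mem_divisors.mp hd).1
  have hk : k = d * (k / d) := (Nat.mul_div_cancel' hdk).symm
  rw [relPrimeCompositionsWithParts]
  symm
  apply Finset.card_bij (fun c _ => scaleComp d k (k / d) hd0 hk c)
  · -- maps into the filter
    intro c hc
    rw [Finset.mem_filter] at hc ⊢
    obtain ⟨-, hlen, hgcd⟩ := hc
    refine ⟨Finset.mem_univ _, ?_, ?_⟩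
    · show (c.blocks.map (fun x => d * x)).length = r
      rw [List.length_map]
      exact hlen
    · show ((c.blocks.map (fun x => d * x) : List ℕ) : Multiset ℕ).gcd = d
      have : ((c.blocks.map (fun x => d * x) : List ℕ) : Multiset ℕ)
          = (c.blocks : Multiset ℕ).map (fun x => d * x) := by
        simp
      rw [this, multiset_gcd_mul', hgcd, mul_one]
  · -- injective
    intro c1 h1 c2 h2 heq
    apply Composition.ext
    have : c1.blocks.map (fun x => d * x) = c2.blocks.map (fun x => d * x) :=
      congrArg Composition.blocks heq
    exact List.map_injective_iff.mpr (fun a b hab => Nat.eq_of_mul_eq_mul_left hd0 hab) this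
  · -- surjective
    intro c hc
    rw [Finset.mem_filter] at hc
    obtain ⟨-, hlen, hgcd⟩ := hc
    have hdvd : ∀ x ∈ c.blocks, d ∣ x := by
      intro x hx
      rw [← hgcd]
      exact Multiset.gcd_dvd (by exact hx)
    refine ⟨⟨c.blocks.map (· / d), ?_, ?_⟩, ?_, ?_⟩
    · intro x hx
      rw [List.mem_map] at hx
      obtain ⟨y, hy, rfl⟩ := hx
      exact Nat.div_pos (Nat.le_of_dvd (c.blocks_pos hy) (hdvd y hy)) hd0
    · rw [sum_map_div' d _ hdvd, c.blocks_sum]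
    · rw [Finset.mem_filter]
      refine ⟨Finset.mem_univ _, ?_, ?_⟩
      · show (c.blocks.map (· / d)).length = r
        rw [List.length_map]; exact hlen
      · show ((c.blocks.map (· / d) : List ℕ) : Multiset ℕ).gcd = 1
        have key : ((c.blocks.map (· / d) : List ℕ) : Multiset ℕ).map (fun x => d * x)
            = (c.blocks : Multiset ℕ) := by
          have := map_div_map_mul' d c.blocks hdvd
          calc ((c.blocks.map (· / d) : List ℕ) : Multiset ℕ).map (fun x => d * x)
              = (((c.blocks.map (· / d)).map (fun x => d * x) : List ℕ) : Multiset ℕ) := by simp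
            _ = (c.blocks : Multiset ℕ) := by rw [this]
        have h2 : d * ((c.blocks.map (· / d) : List ℕ) : Multiset ℕ).gcd = d * 1 := by
          rw [← multiset_gcd_mul', key, hgcd, mul_one]
        exact Nat.eq_of_mul_eq_mul_left hd0 h2
    · apply Composition.ext
      show (c.blocks.map (· / d)).map (fun x => d * x) = c.blocks
      exact map_div_map_mul' d c.blocks hdvd

lemma choose_eq_sum_divisors (r : ℕ) (hr : 0 < r) (k : ℕ) (hk : 0 < k) :
    (k - 1).choose (r - 1) = ∑ m ∈ k.divisors, relPrimeCompositionsWithParts m r := by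
  rw [show (∑ m ∈ k.divisors, relPrimeCompositionsWithParts m r)
      = k.divisors.sum (fun m => relPrimeCompositionsWithParts m r) from rfl]
  rw [← Nat.sum_div_divisors k (fun m => relPrimeCompositionsWithParts m r)]
  rw [← card_comp_length k r hk hr]
  rw [Finset.card_eq_sum_card_fiberwise
    (f := fun c : Composition k => (c.blocks : Multiset ℕ).gcd) (t := k.divisors) ?memb]
  case memb =>
    intro c hc
    rw [Finset.mem_coe, Nat.mem_divisors]
    constructor
    · have h1 : ∀ x ∈ c.blocks, (c.blocks : Multiset ℕ).gcd ∣ x := fun x hx =>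
        Multiset.gcd_dvd (by exact hx)
      have h2 := List.dvd_sum h1
      rwa [c.blocks_sum] at h2
    · omega
  refine Finset.sum_congr rfl fun d hd => ?_
  rw [Finset.filter_filter]
  exact fiber_card k r d hd

lemma divisors_eq_filter (n k : ℕ) (hk : k ∈ Finset.Icc 1 n) :
    k.divisors = (Finset.Icc 1 n).filter (fun m => m ∣ k) := by
  rw [Finset.mem_Icc] at hk
  ext m
  rw [Nat.mem_divisors, Finset.mem_filter, Finset.mem_Icc]
  constructor
  · rintro ⟨hm, -⟩
    have h1 : 1 ≤ m := Nat.pos_of_dvd_of_pos hm (by omega)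
    have h2 : m ≤ k := Nat.le_of_dvd (by omega) hm
    exact ⟨⟨h1, by omega⟩, hm⟩
  · rintro ⟨-, hm⟩
    exact ⟨hm, by omega⟩

lemma pentaSum_eq (n m : ℕ) (hm : m ∈ Finset.Icc 1 n) :
    pentaSum n m = ∑ k ∈ (Finset.Icc 1 n).filter (fun k => m ∣ k),
      pentaCoeff ((n : ℤ) - k) := by
  rw [Finset.mem_Icc] at hm
  obtain ⟨hm1, hmn⟩ := hm
  rw [pentaSum]
  apply Finset.sum_nbij' (i := fun j => (j + 1) * m) (j := fun k => k / m - 1)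
  · intro j hj
    rw [Finset.mem_range] at hj
    have hj' : j ≤ (n - m) / m := by omega
    have h1 : j * m ≤ n - m := (Nat.le_div_iff_mul_le (by omega)).mp hj'
    have e : (j + 1) * m = j * m + m := by ring
    rw [Finset.mem_filter, Finset.mem_Icc]
    exact ⟨⟨by omega, by omega⟩, dvd_mul_left m (j + 1)⟩
  · intro k hk
    rw [Finset.mem_filter, Finset.mem_Icc] at hk
    obtain ⟨⟨hk1, hkn⟩, c, rfl⟩ := hk
    have hc1 : 1 ≤ c := by
      rcases Nat.eq_zero_or_pos c with h | h
      · rw [h, Nat.mul_zero] at hk1; omega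
      · exact h
    rw [Finset.mem_range, Nat.mul_div_cancel_left c (by omega : 0 < m)]
    have e : (c - 1) * m + m = m * c := by
      calc (c - 1) * m + m = (c - 1 + 1) * m := by ring
        _ = c * m := by rw [Nat.sub_add_cancel hc1]
        _ = m * c := Nat.mul_comm c m
    have h2 : (c - 1) * m ≤ n - m := by omega
    have h3 : c - 1 ≤ (n - m) / m := (Nat.le_div_iff_mul_le (by omega : 0 < m)).mpr h2
    omega
  · intro j hj
    rw [Nat.mul_div_cancel _ (by omega : 0 < m)]
    omega
  · intro k hk
    rw [Finset.mem_filter, Finset.mem_Icc] at hk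
    obtain ⟨⟨hk1, hkn⟩, c, rfl⟩ := hk
    have hc1 : 1 ≤ c := by
      rcases Nat.eq_zero_or_pos c with h | h
      · rw [h, Nat.mul_zero] at hk1; omega
      · exact h
    rw [Nat.mul_div_cancel_left c (by omega : 0 < m)]
    rw [Nat.sub_add_cancel hc1]
    exact Nat.mul_comm c m
  · intro j hj
    congr 1
    push_cast
    ring

theorem euler_type_relPrimeCompositionsWithParts (r : ℕ) (hr : 0 < r) (n : ℕ) (hn : 0 < n) :
    ∑ k ∈ Finset.Icc 1 n, ((k - 1).choose (r - 1) : ℤ) * pentaCoeff ((n : ℤ) - k) =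
      ∑ m ∈ Finset.Icc 1 n, (relPrimeCompositionsWithParts m r : ℤ) * pentaSum n m := by
  calc ∑ k ∈ Finset.Icc 1 n, ((k - 1).choose (r - 1) : ℤ) * pentaCoeff ((n : ℤ) - k)
      = ∑ k ∈ Finset.Icc 1 n, ∑ m ∈ k.divisors,
          (relPrimeCompositionsWithParts m r : ℤ) * pentaCoeff ((n : ℤ) - k) := by
        refine Finset.sum_congr rfl fun k hk => ?_
        rw [Finset.mem_Icc] at hk
        rw [choose_eq_sum_divisors r hr k (by omega)]
        push_cast
        rw [Finset.sum_mul]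
    _ = ∑ k ∈ Finset.Icc 1 n, ∑ m ∈ Finset.Icc 1 n,
          if m ∣ k then (relPrimeCompositionsWithParts m r : ℤ) * pentaCoeff ((n : ℤ) - k)
          else 0 := by
        refine Finset.sum_congr rfl fun k hk => ?_
        rw [divisors_eq_filter n k hk, Finset.sum_filter]
    _ = ∑ m ∈ Finset.Icc 1 n, ∑ k ∈ Finset.Icc 1 n,
          if m ∣ k then (relPrimeCompositionsWithParts m r : ℤ) * pentaCoeff ((n : ℤ) - k)
          else 0 := Finset.sum_comm
    _ = ∑ m ∈ Finset.Icc 1 n, (relPrimeCompositionsWithParts m r : ℤ) * pentaSum n m := by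
        refine Finset.sum_congr rfl fun m hm => ?_
        rw [← Finset.sum_filter, pentaSum_eq n m hm, Finset.mul_sum]
end

section
/- Let Φ(m) denote the number of nonempty subsets S of {1, 2, …, m} such that gcd(S) is relatively prime to m. Then for every positive integer n, ∑_{k=1}^{n} (2^k − 1)·ω(n−k) = ∑_{m=1}^{n} Φ(m) · ( ∑_{j=0}^{⌊(n−m)/m⌋} ω((n−m) − j·m) ). -/
open scoped Classical

/-- `Phi m` is the number of nonempty subsets `S` of `{1, 2, …, m}` such that
`gcd S` is relatively prime to `m`. -/
noncomputable def Phi (m : ℕ) : ℕ :=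
  ((Finset.Icc 1 m).powerset.filter
    fun S => S.Nonempty ∧ Nat.Coprime (S.gcd id) m).card

lemma image_mul_gcd (e : ℕ) (S : Finset ℕ) :
    (S.image (· * e)).gcd id = S.gcd id * e := by
  rw [Finset.gcd_image]
  simpa using (Finset.gcd_mul_right (s := S) (f := id) (a := e))

lemma fiber_card_s13 {k : ℕ} (hk : 0 < k) {e : ℕ} (he : e ∈ k.divisors) :
    (((Finset.Icc 1 k).powerset.filter fun S => S.Nonempty).filter
      fun S => Nat.gcd (S.gcd id) k = e).card = Phi (k / e) := by
  obtain ⟨hdvd, -⟩ := Nat.mem_divisors.mp he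
  have he0 : 0 < e := Nat.pos_of_dvd_of_pos hdvd hk
  set m := k / e with hm
  have hem : e * m = k := Nat.mul_div_cancel' hdvd
  -- membership characterizations
  have memfib : ∀ S : Finset ℕ,
      S ∈ (((Finset.Icc 1 k).powerset.filter fun S => S.Nonempty).filter
        fun S => Nat.gcd (S.gcd id) k = e) ↔
      S ⊆ Finset.Icc 1 k ∧ S.Nonempty ∧ Nat.gcd (S.gcd id) k = e := by
    intro S
    simp [Finset.mem_filter, Finset.mem_powerset, and_assoc]
  have memphi : ∀ S : Finset ℕ,
      S ∈ ((Finset.Icc 1 m).powerset.filter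
        fun S => S.Nonempty ∧ Nat.Coprime (S.gcd id) m) ↔
      S ⊆ Finset.Icc 1 m ∧ S.Nonempty ∧ Nat.gcd (S.gcd id) m = 1 := by
    intro S
    simp [Finset.mem_filter, Finset.mem_powerset, Nat.Coprime, and_assoc]
  -- divisibility of elements in the fiber
  have hdvdx : ∀ S : Finset ℕ, Nat.gcd (S.gcd id) k = e → ∀ x ∈ S, e ∣ x := by
    intro S hS x hx
    have h1 : e ∣ S.gcd id := hS ▸ Nat.gcd_dvd_left _ _
    exact h1.trans (Finset.gcd_dvd hx)
  -- roundtrip for sets in the fiber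
  have hround : ∀ S : Finset ℕ, (∀ x ∈ S, e ∣ x) →
      (S.image (· / e)).image (· * e) = S := by
    intro S h
    rw [Finset.image_image]
    have : Finset.image ((· * e) ∘ (· / e)) S = Finset.image id S := by
      apply Finset.image_congr
      intro x hx
      simp only [Function.comp_apply, id_eq]
      exact Nat.div_mul_cancel (h x hx)
    rw [this, Finset.image_id]
  unfold Phi
  refine Finset.card_bij' (fun S _ => S.image (· / e)) (fun S' _ => S'.image (· * e))
    ?_ ?_ ?_ ?_
  · -- forward map lands in the Phi set
    intro S hS
    rw [memfib] at hS
    obtain ⟨hsub, hne, hgcd⟩ := hS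
    have hdx := hdvdx S hgcd
    rw [memphi]
    refine ⟨?_, hne.image _, ?_⟩
    · intro y hy
      obtain ⟨x, hx, rfl⟩ := Finset.mem_image.mp hy
      have hx' := Finset.mem_Icc.mp (hsub hx)
      have hex : e ≤ x := Nat.le_of_dvd (by omega) (hdx x hx)
      rw [Finset.mem_Icc]
      constructor
      · exact (Nat.one_le_div_iff he0).mpr hex
      · exact Nat.div_le_div_right hx'.2
    · -- gcd of quotient set is coprime to m
      have hS' := hround S hdx
      have hg : S.gcd id = (S.image (· / e)).gcd id * e := by
        rw [← image_mul_gcd e (S.image (· / e)), hS']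
      rw [hg, ← hem] at hgcd
      rw [Nat.mul_comm e m, Nat.gcd_mul_right] at hgcd
      have : Nat.gcd ((S.image (· / e)).gcd id) m * e = 1 * e := by
        rw [one_mul]; exact hgcd
      exact Nat.eq_of_mul_eq_mul_right he0 this
  · -- backward map lands in the fiber
    intro S' hS'
    rw [memphi] at hS'
    obtain ⟨hsub, hne, hgcd⟩ := hS'
    rw [memfib]
    refine ⟨?_, hne.image _, ?_⟩
    · intro y hy
      obtain ⟨x, hx, rfl⟩ := Finset.mem_image.mp hy
      have hx' := Finset.mem_Icc.mp (hsub hx)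
      rw [Finset.mem_Icc]
      constructor
      · exact Nat.one_le_iff_ne_zero.mpr (Nat.mul_ne_zero (by omega) (by omega))
      · calc x * e ≤ m * e := Nat.mul_le_mul_right e hx'.2
          _ = k := by rw [Nat.mul_comm]; exact hem
    · rw [image_mul_gcd, ← hem, Nat.mul_comm e m, Nat.gcd_mul_right, hgcd, one_mul]
  · -- left inverse
    intro S hS
    rw [memfib] at hS
    exact hround S (hdvdx S hS.2.2)
  · -- right inverse
    intro S' _
    rw [Finset.image_image]
    have : Finset.image ((· / e) ∘ (· * e)) S' = Finset.image id S' := by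
      apply Finset.image_congr
      intro x _
      simp only [Function.comp_apply, id_eq]
      exact Nat.mul_div_cancel x he0
    rw [this, Finset.image_id]

lemma sum_Phi_divisors {k : ℕ} (hk : 0 < k) :
    ∑ m ∈ k.divisors, Phi m = 2 ^ k - 1 := by
  have hT : ((Finset.Icc 1 k).powerset.filter fun S => S.Nonempty).card = 2 ^ k - 1 := by
    have h1 : ((Finset.Icc 1 k).powerset.filter fun S => S.Nonempty)
        = (Finset.Icc 1 k).powerset.erase ∅ := by
      ext S
      simp [Finset.nonempty_iff_ne_empty, and_comm]
    rw [h1, Finset.card_erase_of_mem (by simp), Finset.card_powerset, Nat.card_Icc]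
    simp
  have hfib : ((Finset.Icc 1 k).powerset.filter fun S => S.Nonempty).card
      = ∑ e ∈ k.divisors,
        (((Finset.Icc 1 k).powerset.filter fun S => S.Nonempty).filter
          fun S => Nat.gcd (S.gcd id) k = e).card := by
    apply Finset.card_eq_sum_card_fiberwise
    intro S _
    rw [Finset.mem_coe, Nat.mem_divisors]
    exact ⟨Nat.gcd_dvd_right _ _, hk.ne'⟩
  calc ∑ m ∈ k.divisors, Phi m
      = ∑ e ∈ k.divisors, Phi (k / e) := (Nat.sum_div_divisors k Phi).symm
    _ = ∑ e ∈ k.divisors,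
        (((Finset.Icc 1 k).powerset.filter fun S => S.Nonempty).filter
          fun S => Nat.gcd (S.gcd id) k = e).card :=
        Finset.sum_congr rfl fun e he => (fiber_card_s13 hk he).symm
    _ = 2 ^ k - 1 := by rw [← hfib, hT]

lemma penta_inner_sum (n m : ℕ) (h1 : 1 ≤ m) (h2 : m ≤ n) :
    ∑ k ∈ (Finset.Icc 1 n).filter (fun k => m ∣ k), pentaCoeff ((n : ℤ) - k)
      = pentaSum n m := by
  unfold pentaSum
  have hq : (n - m) / m + 1 = n / m := by
    conv_rhs => rw [← Nat.sub_add_cancel h2]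
    rw [Nat.add_div_right _ (by omega : 0 < m)]
  rw [hq]
  refine Finset.sum_nbij' (fun k => k / m - 1) (fun j => m * (j + 1)) ?_ ?_ ?_ ?_ ?_
  · intro k hk
    simp only [Finset.mem_filter, Finset.mem_Icc] at hk
    obtain ⟨⟨hk1, hk2⟩, hdvd⟩ := hk
    have hle : m ≤ k := Nat.le_of_dvd (by omega) hdvd
    have h1' : 1 ≤ k / m := (Nat.one_le_div_iff (by omega)).mpr hle
    have h2' : k / m ≤ n / m := Nat.div_le_div_right hk2
    rw [Finset.mem_range]
    omega
  · intro j hj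
    rw [Finset.mem_range] at hj
    simp only [Finset.mem_filter, Finset.mem_Icc]
    refine ⟨⟨Nat.one_le_iff_ne_zero.mpr (by positivity), ?_⟩, Dvd.intro _ rfl⟩
    calc m * (j + 1) ≤ m * (n / m) := Nat.mul_le_mul_left m (by omega)
      _ ≤ n := by rw [Nat.mul_comm]; exact Nat.div_mul_le_self n m
  · intro k hk
    simp only [Finset.mem_filter, Finset.mem_Icc] at hk
    obtain ⟨⟨hk1, hk2⟩, hdvd⟩ := hk
    have hle : m ≤ k := Nat.le_of_dvd (by omega) hdvd
    have h1' : 1 ≤ k / m := (Nat.one_le_div_iff (by omega)).mpr hle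
    have h : k / m - 1 + 1 = k / m := by omega
    rw [h, Nat.mul_div_cancel' hdvd]
  · intro j _
    rw [Nat.mul_div_cancel_left _ (by omega : 0 < m)]
    omega
  · intro k hk
    simp only [Finset.mem_filter, Finset.mem_Icc] at hk
    obtain ⟨⟨hk1, hk2⟩, hdvd⟩ := hk
    have hle : m ≤ k := Nat.le_of_dvd (by omega) hdvd
    have h1' : 1 ≤ k / m := (Nat.one_le_div_iff (by omega)).mpr hle
    have hkq : (k : ℤ) = (m : ℤ) * ((k / m : ℕ) : ℤ) := by
      exact_mod_cast (Nat.mul_div_cancel' hdvd).symm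
    have hcast : ((k / m - 1 : ℕ) : ℤ) = ((k / m : ℕ) : ℤ) - 1 := by
      omega
    congr 1
    rw [hcast, hkq]
    ring

theorem euler_type_Phi (n : ℕ) (hn : 0 < n) :
    ∑ k ∈ Finset.Icc 1 n, ((2 : ℤ) ^ k - 1) * pentaCoeff ((n : ℤ) - k) =
      ∑ m ∈ Finset.Icc 1 n, (Phi m : ℤ) * pentaSum n m := by
  have hdiv : ∀ k ∈ Finset.Icc 1 n,
      (k : ℕ).divisors = (Finset.Icc 1 n).filter (· ∣ k) := by
    intro k hk
    rw [Finset.mem_Icc] at hk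
    ext d
    simp only [Nat.mem_divisors, Finset.mem_filter, Finset.mem_Icc]
    constructor
    · rintro ⟨hd, hk0⟩
      exact ⟨⟨Nat.pos_of_dvd_of_pos hd (by omega),
        le_trans (Nat.le_of_dvd (by omega) hd) hk.2⟩, hd⟩
    · rintro ⟨_, hd⟩
      exact ⟨hd, by omega⟩
  have step1 : ∀ k ∈ Finset.Icc 1 n,
      ((2 : ℤ) ^ k - 1) * pentaCoeff ((n : ℤ) - k) =
        ∑ m ∈ Finset.Icc 1 n,
          (if m ∣ k then (Phi m : ℤ) * pentaCoeff ((n : ℤ) - k) else 0) := by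
    intro k hk
    have hk' := Finset.mem_Icc.mp hk
    have h2 : ((2 : ℤ) ^ k - 1) = ((∑ m ∈ k.divisors, Phi m : ℕ) : ℤ) := by
      rw [sum_Phi_divisors (by omega : 0 < k)]
      have h12 : 1 ≤ 2 ^ k := Nat.one_le_two_pow
      push_cast [h12]
      ring
    rw [h2, Nat.cast_sum, Finset.sum_mul, hdiv k hk, Finset.sum_filter]
  rw [Finset.sum_congr rfl step1, Finset.sum_comm]
  refine Finset.sum_congr rfl fun m hm => ?_
  rw [Finset.mem_Icc] at hm
  rw [← Finset.sum_filter, ← Finset.mul_sum, penta_inner_sum n m hm.1 hm.2]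
end
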